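/- Let A_L, Ã_R : [0,T] → M_n(ℂ) be continuous and let F : [0,T] → M_n(ℂ) be differentiable with F(0) = 1 and F′(s) = i A_L(s) F(s) + i F(s) Ã_R(s) for all s ∈ [0,T]. Suppose there are constants c, a ≥ 0 and k ∈ ℕ such that ‖F(s) − 1‖ ≤ c s^{k+1}, ‖A_L(s)‖ ≤ a, and ‖Ã_R(s)‖ ≤ a for all s ∈ [0,T]. Then for every t ∈ [0,T], ‖ ∫₀ᵗ (A_L(s) + Ã_R(s)) ds ‖ ≤ c t^{k+1} + 2 a c t^{k+2}/(k+2). -/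

import Mathlib

open scoped Matrix.Norms.L2Operator
open Matrix

/-- if the error unitary `F` generated by `A_L` and `Ã_R` is
`O(s^{k+1})`-close to the identity and the generators are bounded by `a`, then
`‖∫₀ᵗ (A_L(s) + Ã_R(s)) ds‖ ≤ c t^{k+1} + 2 a c t^{k+2}/(k+2)`. -/
theorem stmt11 {n : ℕ} (T : ℝ) (hT : 0 ≤ T)
    (AL AR : ℝ → Matrix (Fin n) (Fin n) ℂ)
    (hALcont : ContinuousOn AL (Set.Icc 0 T))
    (hARcont : ContinuousOn AR (Set.Icc 0 T))
    (F : ℝ → Matrix (Fin n) (Fin n) ℂ) (hF0 : F 0 = 1)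
    (hF : ∀ s ∈ Set.Icc 0 T,
      HasDerivAt F (Complex.I • (AL s * F s) + Complex.I • (F s * AR s)) s)
    (c a : ℝ) (hc : 0 ≤ c) (ha : 0 ≤ a) (k : ℕ)
    (hFclose : ∀ s ∈ Set.Icc 0 T, ‖F s - 1‖ ≤ c * s ^ (k + 1))
    (hALbdd : ∀ s ∈ Set.Icc 0 T, ‖AL s‖ ≤ a)
    (hARbdd : ∀ s ∈ Set.Icc 0 T, ‖AR s‖ ≤ a) :
    ∀ t ∈ Set.Icc 0 T,
      ‖∫ s in (0:ℝ)..t, (AL s + AR s)‖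
        ≤ c * t ^ (k + 1) + 2 * a * c * t ^ (k + 2) / (k + 2) := by
  intro t ht
  obtain ⟨ht0, htT⟩ := ht
  have hsub : Set.Icc (0:ℝ) t ⊆ Set.Icc 0 T := Set.Icc_subset_Icc le_rfl htT
  have huIcc : Set.uIcc (0:ℝ) t = Set.Icc 0 t := Set.uIcc_of_le ht0
  -- continuity of F on Icc 0 T
  have hFcont : ContinuousOn F (Set.Icc 0 T) := fun s hs =>
    (hF s hs).continuousAt.continuousWithinAt
  set E : ℝ → Matrix (Fin n) (Fin n) ℂ := fun s =>
    Complex.I • (AL s * (F s - 1)) + Complex.I • ((F s - 1) * AR s) with hE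
  have hEcont : ContinuousOn E (Set.Icc 0 T) := by
    apply ContinuousOn.add
    · exact ContinuousOn.const_smul (g := fun s => AL s * (F s - 1)) (hALcont.mul (hFcont.sub continuousOn_const)) Complex.I
    · exact ContinuousOn.const_smul (g := fun s => (F s - 1) * AR s) ((hFcont.sub continuousOn_const).mul hARcont) Complex.I
  have hGcont : ContinuousOn (fun s => AL s + AR s) (Set.Icc 0 T) :=
    hALcont.add hARcont
  have hGint : IntervalIntegrable (fun s => AL s + AR s) MeasureTheory.volume 0 t :=
    (hGcont.mono (huIcc ▸ hsub)).intervalIntegrable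
  have hEint : IntervalIntegrable E MeasureTheory.volume 0 t :=
    (hEcont.mono (huIcc ▸ hsub)).intervalIntegrable
  have hHint : IntervalIntegrable
      (fun s => Complex.I • (AL s * F s) + Complex.I • (F s * AR s))
      MeasureTheory.volume 0 t := by
    apply ContinuousOn.intervalIntegrable
    rw [huIcc]
    apply ContinuousOn.add
    · exact ContinuousOn.const_smul (g := fun s => AL s * F s) ((hALcont.mono hsub).mul (hFcont.mono hsub)) Complex.I
    · exact ContinuousOn.const_smul (g := fun s => F s * AR s) ((hFcont.mono hsub).mul (hARcont.mono hsub)) Complex.I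
  -- FTC
  have hFTC : (∫ s in (0:ℝ)..t,
      (Complex.I • (AL s * F s) + Complex.I • (F s * AR s))) = F t - 1 := by
    rw [← hF0]
    exact intervalIntegral.integral_eq_sub_of_hasDerivAt
      (fun s hs => hF s (hsub (huIcc ▸ hs))) hHint
  -- split the integrand
  have hsplit : ∀ s, Complex.I • (AL s * F s) + Complex.I • (F s * AR s)
      = Complex.I • (AL s + AR s) + E s := by
    intro s
    simp only [hE, mul_sub, sub_mul, mul_one, one_mul, smul_sub, smul_add]
    abel
  have key : Complex.I • (∫ s in (0:ℝ)..t, (AL s + AR s))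
      = (F t - 1) - ∫ s in (0:ℝ)..t, E s := by
    have h1 : (∫ s in (0:ℝ)..t, (Complex.I • (AL s + AR s) + E s))
        = Complex.I • (∫ s in (0:ℝ)..t, (AL s + AR s)) + ∫ s in (0:ℝ)..t, E s := by
      have hGsint : IntervalIntegrable (fun s => Complex.I • (AL s + AR s))
          MeasureTheory.volume 0 t := by
        apply ContinuousOn.intervalIntegrable
        rw [huIcc]
        exact ContinuousOn.const_smul (g := fun s => AL s + AR s) (hGcont.mono hsub) Complex.I
      rw [intervalIntegral.integral_add hGsint hEint,
        intervalIntegral.integral_smul]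
    rw [← hFTC, intervalIntegral.integral_congr (g := fun s =>
      Complex.I • (AL s + AR s) + E s) (fun s _ => hsplit s), h1]
    abel
  have hnorm : ‖∫ s in (0:ℝ)..t, (AL s + AR s)‖
      = ‖Complex.I • (∫ s in (0:ℝ)..t, (AL s + AR s))‖ := by
    rw [norm_smul, Complex.norm_I, one_mul]
  rw [hnorm, key]
  have hEbound : ‖∫ s in (0:ℝ)..t, E s‖
      ≤ ∫ s in (0:ℝ)..t, 2 * a * c * s ^ (k + 1) := by
    apply intervalIntegral.norm_integral_le_of_norm_le ht0 (g := fun s => 2 * a * c * s ^ (k + 1))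
    · refine Filter.Eventually.of_forall (fun s hs' => ?_)
      have hs : s ∈ Set.Ioc (min 0 t) (max 0 t) := by rwa [min_eq_left ht0, max_eq_right ht0]
      have hsI : s ∈ Set.Icc 0 T :=
        ⟨le_of_lt (lt_of_le_of_lt (le_min le_rfl ht0) hs.1),
         le_trans hs.2 (max_le hT htT)⟩
      have hb1 : ‖Complex.I • (AL s * (F s - 1))‖ ≤ a * (c * s ^ (k + 1)) := by
        rw [norm_smul, Complex.norm_I, one_mul]
        exact le_trans (norm_mul_le _ _)
          (mul_le_mul (hALbdd s hsI) (hFclose s hsI) (norm_nonneg _) ha)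
      have hb2 : ‖Complex.I • ((F s - 1) * AR s)‖ ≤ (c * s ^ (k + 1)) * a := by
        rw [norm_smul, Complex.norm_I, one_mul]
        exact le_trans (norm_mul_le _ _)
          (mul_le_mul (hFclose s hsI) (hARbdd s hsI) (norm_nonneg _)
            (mul_nonneg hc (pow_nonneg hsI.1 _)))
      calc ‖E s‖ ≤ ‖Complex.I • (AL s * (F s - 1))‖ + ‖Complex.I • ((F s - 1) * AR s)‖ :=
            norm_add_le _ _
        _ ≤ a * (c * s ^ (k + 1)) + (c * s ^ (k + 1)) * a := add_le_add hb1 hb2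
        _ = 2 * a * c * s ^ (k + 1) := by ring
    · apply ContinuousOn.intervalIntegrable
      rw [huIcc]
      fun_prop
  have hpow : (∫ s in (0:ℝ)..t, 2 * a * c * s ^ (k + 1))
      = 2 * a * c * t ^ (k + 2) / (k + 2) := by
    rw [intervalIntegral.integral_const_mul, integral_pow]
    push_cast
    ring
  calc ‖(F t - 1) - ∫ s in (0:ℝ)..t, E s‖
      ≤ ‖F t - 1‖ + ‖∫ s in (0:ℝ)..t, E s‖ := norm_sub_le _ _
    _ ≤ c * t ^ (k + 1) + 2 * a * c * t ^ (k + 2) / (k + 2) := by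
        apply add_le_add (hFclose t ⟨ht0, htT⟩)
        rw [← hpow]; exact hEbound
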